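/- For every positive integer n, there exists a family S of n pairwise disjoint segments in ℝ² such that every subfamily S' ⊆ S that admits escape routes satisfies |S'| ≤ 2·⌈√n⌉ − 1. -/

import Mathlib

noncomputable section

/-- A point of the plane. -/
abbrev Pt : Type := ℝ × ℝ

/-- The closed segment with endpoints `a` and `b`. -/
def Seg (a b : Pt) : Set Pt := segment ℝ a b

/-- The set of endpoints of the segments of a family `S`. -/
def SegEndpoints (S : Finset (Pt × Pt)) : Set Pt :=
  ⋃ s ∈ (S : Set (Pt × Pt)), ({s.1, s.2} : Set Pt)

/-- `S` is a family of (nondegenerate) pairwise disjoint segments. -/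
def DisjointFamily (S : Finset (Pt × Pt)) : Prop :=
  (∀ s ∈ S, s.1 ≠ s.2) ∧
  (S : Set (Pt × Pt)).Pairwise (fun s t => Disjoint (Seg s.1 s.2) (Seg t.1 t.2))

/-- No three endpoints of segments of `S` are collinear. -/
def GeneralPosition (S : Finset (Pt × Pt)) : Prop :=
  ∀ p ∈ SegEndpoints S, ∀ q ∈ SegEndpoints S, ∀ r ∈ SegEndpoints S,
    p ≠ q → p ≠ r → q ≠ r → ¬ Collinear ℝ ({p, q, r} : Set Pt)

/-- A simple polygon: a cyclic sequence of `k ≥ 3` pairwise distinct vertices such that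
two edges intersect iff they are consecutive, and consecutive edges meet exactly in
their common endpoint. -/
structure SimplePolygon : Type where
  k : ℕ
  three_le : 3 ≤ k
  vtx : ZMod k → Pt
  inj : Function.Injective vtx
  edge_inter : ∀ i j : ZMod k, i ≠ j →
    ((Seg (vtx i) (vtx (i + 1)) ∩ Seg (vtx j) (vtx (j + 1))).Nonempty ↔
      (j = i + 1 ∨ i = j + 1))
  edge_consec : ∀ i : ZMod k,
    Seg (vtx i) (vtx (i + 1)) ∩ Seg (vtx (i + 1)) (vtx (i + 2)) = {vtx (i + 1)}

/-- The union of the edges of a simple polygon. -/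
def SimplePolygon.edgeUnion (P : SimplePolygon) : Set Pt :=
  ⋃ i : ZMod P.k, Seg (P.vtx i) (P.vtx (i + 1))

/-- The closed region of a simple polygon: the union of its edges together with all
bounded connected components of the complement of the union of the edges. -/
def SimplePolygon.closedRegion (P : SimplePolygon) : Set Pt :=
  P.edgeUnion ∪
    {x | x ∉ P.edgeUnion ∧ Bornology.IsBounded (connectedComponentIn (P.edgeUnion)ᶜ x)}

/-- `P` is a circumscribing polygon for `S`: its vertex set is exactly the set of
endpoints of segments of `S`, and every segment of `S` lies in the closed region of `P`. -/
def IsCircumscribing (S : Finset (Pt × Pt)) (P : SimplePolygon) : Prop :=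
  Set.range P.vtx = SegEndpoints S ∧ ∀ s ∈ S, Seg s.1 s.2 ⊆ P.closedRegion

/-- The ray from `p` in direction `v`. -/
def Ray (p v : Pt) : Set Pt := {x : Pt | ∃ t : ℝ, 0 ≤ t ∧ x = p + t • v}

/-- `S` admits escape routes: the segments can be indexed and oriented as `[a i, b i]`
so that for every `i`, the open ray extending the segment beyond `b i` is either disjoint
from all other segments, or first meets a ray with a smaller index. -/
def AdmitsEscapeRoutes (S : Finset (Pt × Pt)) : Prop :=
  ∃ (n : ℕ) (a b : Fin n → Pt),
    (∀ i, a i ≠ b i) ∧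
    Function.Injective (fun i => Seg (a i) (b i)) ∧
    Set.range (fun i => Seg (a i) (b i)) = (fun s => Seg s.1 s.2) '' (S : Set (Pt × Pt)) ∧
    ∀ i : Fin n,
      (∀ j : Fin n, j ≠ i → Disjoint (Ray (b i) (b i - a i) \ {b i}) (Seg (a j) (b j))) ∨
      (∃ (j : Fin n) (t : ℝ), j < i ∧ 0 < t ∧
        b i + t • (b i - a i) ∈ Ray (b j) (b j - a j) ∧
        ∀ j' : Fin n, j' ≠ i → ∀ t' : ℝ, 0 < t' → t' ≤ t →
          b i + t' • (b i - a i) ∉ Seg (a j') (b j'))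

/-- `S` is extensible to pairwise disjoint rays, one containing each segment. -/
def ExtensibleToRays (S : Finset (Pt × Pt)) : Prop :=
  ∃ R : Pt × Pt → Set Pt,
    (∀ s ∈ S, (∃ p v : Pt, v ≠ 0 ∧ R s = Ray p v) ∧ Seg s.1 s.2 ⊆ R s) ∧
    (S : Set (Pt × Pt)).Pairwise (fun s t => Disjoint (R s) (R t))

namespace EP

lemma pt_add_smul (p v : Pt) (t : ℝ) : p + t • v = (p.1 + t*v.1, p.2 + t*v.2) := by
  ext <;> simp

lemma mem_seg_iff {x y z : Pt} :
    z ∈ Seg x y ↔ ∃ θ : ℝ, 0 ≤ θ ∧ θ ≤ 1 ∧ z = (1-θ) • x + θ • y := by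
  rw [Seg, segment_eq_image]
  constructor
  · rintro ⟨θ, ⟨h0, h1⟩, rfl⟩; exact ⟨θ, h0, h1, rfl⟩
  · rintro ⟨θ, h0, h1, rfl⟩; exact ⟨θ, ⟨h0, h1⟩, rfl⟩

lemma mem_seg_horiz {x1 x2 y : ℝ} (h : x1 ≤ x2) {z : Pt} :
    z ∈ Seg (x1, y) (x2, y) ↔ z.2 = y ∧ x1 ≤ z.1 ∧ z.1 ≤ x2 := by
  rw [mem_seg_iff]
  constructor
  · rintro ⟨θ, h0, h1, rfl⟩
    refine ⟨by simp; ring, ?_, ?_⟩ <;> simp <;> nlinarith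
  · rintro ⟨hz2, hl, hr⟩
    rcases eq_or_lt_of_le h with rfl | hlt
    · exact ⟨0, le_refl _, zero_le_one, by
        ext <;> simp [hz2] ; linarith⟩
    · refine ⟨(z.1 - x1)/(x2 - x1), div_nonneg (by linarith) (by linarith), ?_, ?_⟩
      · rw [div_le_one (by linarith)]; linarith
      · have hne : x2 - x1 ≠ 0 := by linarith
        ext <;> simp [hz2] <;> field_simp <;> ring

lemma mem_seg_vert {y1 y2 x : ℝ} (h : y1 ≤ y2) {z : Pt} :
    z ∈ Seg (x, y1) (x, y2) ↔ z.1 = x ∧ y1 ≤ z.2 ∧ z.2 ≤ y2 := by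
  rw [mem_seg_iff]
  constructor
  · rintro ⟨θ, h0, h1, rfl⟩
    refine ⟨by simp; ring, ?_, ?_⟩ <;> simp <;> nlinarith
  · rintro ⟨hz1, hl, hr⟩
    rcases eq_or_lt_of_le h with rfl | hlt
    · exact ⟨0, le_refl _, zero_le_one, by
        ext <;> simp [hz1] ; linarith⟩
    · refine ⟨(z.2 - y1)/(y2 - y1), div_nonneg (by linarith) (by linarith), ?_, ?_⟩
      · rw [div_le_one (by linarith)]; linarith
      · have hne : y2 - y1 ≠ 0 := by linarith
        ext <;> simp [hz1] <;> field_simp <;> ring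

lemma seg_comm (a b : Pt) : Seg a b = Seg b a := segment_symm ℝ a b

/-- endpoints of a horizontal segment -/
lemma seg_eq_horiz {a b : Pt} {x1 x2 y : ℝ} (h12 : x1 < x2) (hab : a ≠ b)
    (h : Seg a b = Seg (x1,y) (x2,y)) :
    (a = (x1,y) ∧ b = (x2,y)) ∨ (a = (x2,y) ∧ b = (x1,y)) := by
  have ha : a ∈ Seg (x1,y) (x2,y) := h ▸ left_mem_segment ℝ a b
  have hb : b ∈ Seg (x1,y) (x2,y) := h ▸ right_mem_segment ℝ a b
  rw [mem_seg_horiz h12.le] at ha hb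
  obtain ⟨ha2, hal, har⟩ := ha
  obtain ⟨hb2, hbl, hbr⟩ := hb
  have hP1 : (x1, y) ∈ Seg a b := h ▸ left_mem_segment ℝ (x1,y) (x2,y)
  have hP2 : (x2, y) ∈ Seg a b := h ▸ right_mem_segment ℝ (x1,y) (x2,y)
  have hae : a = (a.1, y) := by ext <;> simp [ha2]
  have hbe : b = (b.1, y) := by ext <;> simp [hb2]
  rw [hae, hbe] at hP1 hP2
  have hab1 : a.1 ≠ b.1 := by
    intro hcon; apply hab; rw [hae, hbe, hcon]
  rcases le_total a.1 b.1 with hle | hle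
  · rw [mem_seg_horiz hle] at hP1 hP2
    left
    constructor
    · rw [hae]; ext <;> simp; linarith [hP1.2.1]
    · rw [hbe]; ext <;> simp; linarith [hP2.2.2]
  · rw [seg_comm, mem_seg_horiz hle] at hP1 hP2
    right
    constructor
    · rw [hae]; ext <;> simp; linarith [hP2.2.2]
    · rw [hbe]; ext <;> simp; linarith [hP1.2.1]

lemma seg_eq_vert {a b : Pt} {y1 y2 x : ℝ} (h12 : y1 < y2) (hab : a ≠ b)
    (h : Seg a b = Seg (x,y1) (x,y2)) :
    (a = (x,y1) ∧ b = (x,y2)) ∨ (a = (x,y2) ∧ b = (x,y1)) := by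
  have ha : a ∈ Seg (x,y1) (x,y2) := h ▸ left_mem_segment ℝ a b
  have hb : b ∈ Seg (x,y1) (x,y2) := h ▸ right_mem_segment ℝ a b
  rw [mem_seg_vert h12.le] at ha hb
  obtain ⟨ha2, hal, har⟩ := ha
  obtain ⟨hb2, hbl, hbr⟩ := hb
  have hP1 : (x, y1) ∈ Seg a b := h ▸ left_mem_segment ℝ (x,y1) (x,y2)
  have hP2 : (x, y2) ∈ Seg a b := h ▸ right_mem_segment ℝ (x,y1) (x,y2)
  have hae : a = (x, a.2) := by ext <;> simp [ha2]
  have hbe : b = (x, b.2) := by ext <;> simp [hb2]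
  rw [hae, hbe] at hP1 hP2
  have hab1 : a.2 ≠ b.2 := by
    intro hcon; apply hab; rw [hae, hbe, hcon]
  rcases le_total a.2 b.2 with hle | hle
  · rw [mem_seg_vert hle] at hP1 hP2
    left
    constructor
    · rw [hae]; ext <;> simp; linarith [hP1.2.1]
    · rw [hbe]; ext <;> simp; linarith [hP2.2.2]
  · rw [seg_comm, mem_seg_vert hle] at hP1 hP2
    right
    constructor
    · rw [hae]; ext <;> simp; linarith [hP2.2.2]
    · rw [hbe]; ext <;> simp; linarith [hP1.2.1]

end EP
namespace EP

def hL (y j : ℕ) : Pt := (-(2*(j:ℝ))-2, 3*(y:ℝ))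
def hR (y j : ℕ) : Pt := (-(2*(j:ℝ))-1, 3*(y:ℝ))
def vB (k : ℕ) : Pt := ((0:ℝ), 3*(k:ℝ)+2)
def vT (k : ℕ) : Pt := ((0:ℝ), 3*(k:ℝ)+4)
def hseg (y j : ℕ) : Pt × Pt := (hL y j, hR y j)
def vseg (k : ℕ) : Pt × Pt := (vB k, vT k)

def Fam (m : ℕ) : Finset (Pt × Pt) :=
  ((Finset.Ioo 0 m) ×ˢ (Finset.range m)).image (fun p => hseg p.1 p.2) ∪
    (Finset.range m).image vseg

lemma mem_Fam {m : ℕ} {s : Pt × Pt} : s ∈ Fam m ↔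
    (∃ y j, 0 < y ∧ y < m ∧ j < m ∧ s = hseg y j) ∨ (∃ k, k < m ∧ s = vseg k) := by
  simp only [Fam, Finset.mem_union, Finset.mem_image, Finset.mem_product,
    Finset.mem_Ioo, Finset.mem_range, Prod.exists]
  constructor
  · rintro (⟨y, j, ⟨⟨h1,h2⟩,h3⟩, rfl⟩ | ⟨k, hk, rfl⟩)
    · exact Or.inl ⟨y, j, h1, h2, h3, rfl⟩
    · exact Or.inr ⟨k, hk, rfl⟩
  · rintro (⟨y, j, h1, h2, h3, rfl⟩ | ⟨k, hk, rfl⟩)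
    · exact Or.inl ⟨y, j, ⟨⟨h1,h2⟩,h3⟩, rfl⟩
    · exact Or.inr ⟨k, hk, rfl⟩

lemma hseg_inj {y j y' j' : ℕ} (h : hseg y j = hseg y' j') : y = y' ∧ j = j' := by
  have h1 := congrArg (fun s => s.1.1) h
  have h2 := congrArg (fun s => s.1.2) h
  simp [hseg, hL] at h1 h2
  exact ⟨h2, h1⟩
lemma vseg_inj {k k' : ℕ} (h : vseg k = vseg k') : k = k' := by
  have h2 := congrArg (fun s => s.1.2) h
  simp [vseg, vB] at h2
  exact_mod_cast h2

lemma card_Fam {m : ℕ} (hm : 1 ≤ m) : (Fam m).card = m * m := by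
  rw [Fam, Finset.card_union_of_disjoint, Finset.card_image_of_injective,
    Finset.card_image_of_injective]
  · rw [Finset.card_product, Nat.card_Ioo, Finset.card_range]
    cases m with
    | zero => omega
    | succ k => simp; ring
  · intro k k' h; exact vseg_inj h
  · rintro ⟨y,j⟩ ⟨y',j'⟩ h
    obtain ⟨h1, h2⟩ := hseg_inj h
    subst h1; subst h2; rfl
  · rw [Finset.disjoint_left]
    rintro s hs hs'
    simp [Finset.mem_image] at hs hs'
    obtain ⟨y, j, _, rfl⟩ := hs
    obtain ⟨k, _, hk⟩ := hs'
    have := congrArg (fun s => s.1.1) hk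
    simp [hseg, vseg, hL, vB] at this
    have := Nat.cast_nonneg (α := ℝ) j
    linarith

end EP


namespace EP

lemma hL_lt {y j : ℕ} : (hL y j).1 < (hR y j).1 := by simp [hL, hR]
lemma vB_lt {k : ℕ} : (vB k).2 < (vT k).2 := by simp [vB, vT]; linarith

lemma mem_seg_h {y j : ℕ} {z : Pt} : z ∈ Seg (hL y j) (hR y j) ↔
    z.2 = 3*(y:ℝ) ∧ -(2*(j:ℝ))-2 ≤ z.1 ∧ z.1 ≤ -(2*(j:ℝ))-1 := by
  have := mem_seg_horiz (x1 := -(2*(j:ℝ))-2) (x2 := -(2*(j:ℝ))-1) (y := 3*(y:ℝ))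
    (by linarith) (z := z)
  simpa [hL, hR] using this

lemma mem_seg_v {k : ℕ} {z : Pt} : z ∈ Seg (vB k) (vT k) ↔
    z.1 = 0 ∧ 3*(k:ℝ)+2 ≤ z.2 ∧ z.2 ≤ 3*(k:ℝ)+4 := by
  have := mem_seg_vert (y1 := 3*(k:ℝ)+2) (y2 := 3*(k:ℝ)+4) (x := (0:ℝ))
    (by linarith) (z := z)
  simpa [vB, vT] using this

lemma natcast_lt {a b : ℕ} (h : a < b) : (a:ℝ) + 1 ≤ (b:ℝ) := by
  have : (a+1 : ℕ) ≤ b := h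
  exact_mod_cast this

lemma nondeg_Fam {m : ℕ} : ∀ s ∈ Fam m, s.1 ≠ s.2 := by
  intro s hs
  rw [mem_Fam] at hs
  rcases hs with ⟨y, j, _, _, _, rfl⟩ | ⟨k, _, rfl⟩
  · intro h
    have := congrArg Prod.fst h
    simp [hseg, hL, hR] at this
  · intro h
    have := congrArg Prod.snd h
    simp [vseg, vB, vT] at this

lemma disj_Fam {m : ℕ} :
    ((Fam m : Set (Pt × Pt))).Pairwise (fun s t => Disjoint (Seg s.1 s.2) (Seg t.1 t.2)) := by
  intro s hs t ht hne
  rw [Finset.mem_coe, mem_Fam] at hs ht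
  rw [Set.disjoint_left]
  intro z hz1 hz2
  rcases hs with ⟨y, j, _, _, _, rfl⟩ | ⟨k, _, rfl⟩ <;>
    rcases ht with ⟨y', j', _, _, _, rfl⟩ | ⟨k', _, rfl⟩
  · simp only [hseg] at hz1 hz2
    rw [mem_seg_h] at hz1 hz2
    have hy : y = y' := by
      have : (y:ℝ) = y' := by linarith [hz1.1, hz2.1]
      exact_mod_cast this
    subst hy
    have hj : j ≠ j' := by
      intro hj; exact hne (by rw [hj])
    rcases Nat.lt_or_ge j j' with h | h
    · have := natcast_lt h
      linarith [hz1.2.2, hz2.2.1]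
    · have hj' : j' < j := by omega
      have := natcast_lt hj'
      linarith [hz2.2.2, hz1.2.1]
  · simp only [hseg, vseg] at hz1 hz2
    rw [mem_seg_h] at hz1; rw [mem_seg_v] at hz2
    have := Nat.cast_nonneg (α := ℝ) j
    linarith [hz1.2.2, hz2.1.symm.le, hz2.1.ge]
  · simp only [hseg, vseg] at hz1 hz2
    rw [mem_seg_v] at hz1; rw [mem_seg_h] at hz2
    have := Nat.cast_nonneg (α := ℝ) j'
    linarith [hz2.2.2, hz1.1.symm.le, hz1.1.ge]
  · simp only [vseg] at hz1 hz2
    rw [mem_seg_v] at hz1; rw [mem_seg_v] at hz2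
    have hk : k ≠ k' := by
      intro hk; exact hne (by rw [hk])
    rcases Nat.lt_or_ge k k' with h | h
    · have := natcast_lt h
      linarith [hz1.2.2, hz2.2.1]
    · have hk' : k' < k := by omega
      have := natcast_lt hk'
      linarith [hz2.2.2, hz1.2.1]

end EP


namespace EP
variable {N : ℕ}

def RorH (A B : Fin N → Pt) (i : Fin N) (y j : ℕ) : Prop := A i = hL y j ∧ B i = hR y j
def LorH (A B : Fin N → Pt) (i : Fin N) (y j : ℕ) : Prop := A i = hR y j ∧ B i = hL y j
def isH (A B : Fin N → Pt) (i : Fin N) (y j : ℕ) : Prop := RorH A B i y j ∨ LorH A B i y j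
def isV (A B : Fin N → Pt) (i : Fin N) (k : ℕ) : Prop :=
  (A i = vB k ∧ B i = vT k) ∨ (A i = vT k ∧ B i = vB k)

variable {A B : Fin N → Pt}

lemma seg_of_isH {i : Fin N} {y j : ℕ} (h : isH A B i y j) : Seg (A i) (B i) = Seg (hL y j) (hR y j) := by
  rcases h with ⟨h1, h2⟩ | ⟨h1, h2⟩
  · rw [h1, h2]
  · rw [h1, h2, seg_comm]

lemma seg_of_isV {i : Fin N} {k : ℕ} (h : isV A B i k) : Seg (A i) (B i) = Seg (vB k) (vT k) := by
  rcases h with ⟨h1, h2⟩ | ⟨h1, h2⟩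
  · rw [h1, h2]
  · rw [h1, h2, seg_comm]

lemma cast_eq_nat {a b : ℕ} (h : (a:ℝ) = b) : a = b := by exact_mod_cast h

lemma isH_unique {i i' : Fin N} {y j j' : ℕ} (h : isH A B i y j) (h' : isH A B i' y j')
    (hii : i = i') : j = j' := by
  subst hii
  rcases h with ⟨h1, _⟩ | ⟨h1, _⟩ <;> rcases h' with ⟨h1', _⟩ | ⟨h1', _⟩ <;>
    rw [h1] at h1' <;>
    [skip; skip; skip; skip] <;>
    · have := congrArg Prod.fst h1'
      simp [hL, hR] at this
      first
      | (exact_mod_cast this)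
      | (exfalso
         have h2 : ((2*j+2 : ℕ) : ℝ) = ((2*j'+1 : ℕ) : ℝ) ∨ ((2*j+1 : ℕ) : ℝ) = ((2*j'+2 : ℕ) : ℝ) := by
           push_cast
           first | (left; linarith) | (right; linarith)
         rcases h2 with h2 | h2 <;> (have := cast_eq_nat h2; omega))

lemma isH_row {i : Fin N} {y j y' j' : ℕ} (h : isH A B i y j) (h' : isH A B i y' j') : y = y' := by
  rcases h with ⟨h1, _⟩ | ⟨h1, _⟩ <;> rcases h' with ⟨h1', _⟩ | ⟨h1', _⟩ <;>
    rw [h1] at h1' <;>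
    · have := congrArg Prod.snd h1'
      simp [hL, hR] at this
      exact_mod_cast this

lemma isH_isV_false {i i' : Fin N} {y j k : ℕ} (h : isH A B i y j) (h' : isV A B i' k) (hii : i = i') :
    False := by
  subst hii
  rcases h with ⟨h1, _⟩ | ⟨h1, _⟩ <;> rcases h' with ⟨h1', _⟩ | ⟨h1', _⟩ <;>
    rw [h1] at h1' <;>
    · have := congrArg Prod.fst h1'
      simp [hL, hR, vB, vT] at this
      have := Nat.cast_nonneg (α := ℝ) j
      linarith

lemma isV_unique {i i' : Fin N} {k k' : ℕ} (h : isV A B i k) (h' : isV A B i' k') (hii : i = i') :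
    k = k' := by
  subst hii
  rcases h with ⟨h1, _⟩ | ⟨h1, _⟩ <;> rcases h' with ⟨h1', _⟩ | ⟨h1', _⟩ <;>
    rw [h1] at h1' <;>
    · have := congrArg Prod.snd h1'
      simp [vB, vT] at this
      first
      | (exact_mod_cast this)
      | (exfalso
         have h2 : ((3*k+2 : ℕ) : ℝ) = ((3*k'+4 : ℕ) : ℝ) ∨ ((3*k+4 : ℕ) : ℝ) = ((3*k'+2 : ℕ) : ℝ) := by
           push_cast
           first | (left; linarith) | (right; linarith)
         rcases h2 with h2 | h2 <;> (have := cast_eq_nat h2; omega))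

lemma classify {m : ℕ} {S' : Finset (Pt × Pt)} (hsub : S' ⊆ Fam m)
    (hAB : ∀ i, A i ≠ B i)
    (hmemS : ∀ i : Fin N, ∃ s ∈ S', Seg (A i) (B i) = Seg s.1 s.2) :
    ∀ i : Fin N, (∃ y j, 0 < y ∧ y < m ∧ j < m ∧ isH A B i y j ∧ hseg y j ∈ S')
      ∨ (∃ k, k < m ∧ isV A B i k ∧ vseg k ∈ S') := by
  intro i
  obtain ⟨s, hsS, hseq⟩ := hmemS i
  have hsF := hsub hsS
  rw [mem_Fam] at hsF
  rcases hsF with ⟨y, j, h1, h2, h3, rfl⟩ | ⟨k, hk, rfl⟩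
  · left
    refine ⟨y, j, h1, h2, h3, ?_, hsS⟩
    have hseq' : Seg (A i) (B i) =
        Seg ((-(2*(j:ℝ))-2, 3*(y:ℝ)) : Pt) ((-(2*(j:ℝ))-1, 3*(y:ℝ)) : Pt) := hseq
    have := seg_eq_horiz (by linarith) (hAB i) hseq'
    rcases this with ⟨e1, e2⟩ | ⟨e1, e2⟩
    · exact Or.inl ⟨e1, e2⟩
    · exact Or.inr ⟨e1, e2⟩
  · right
    refine ⟨k, hk, ?_, hsS⟩
    have hseq' : Seg (A i) (B i) =
        Seg (((0:ℝ), 3*(k:ℝ)+2) : Pt) (((0:ℝ), 3*(k:ℝ)+4) : Pt) := hseq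
    have := seg_eq_vert (by linarith) (hAB i) hseq'
    rcases this with ⟨e1, e2⟩ | ⟨e1, e2⟩
    · exact Or.inl ⟨e1, e2⟩
    · exact Or.inr ⟨e1, e2⟩

lemma idx_of_mem {S' : Finset (Pt × Pt)}
    (hsurjS : ∀ s ∈ S', ∃ i : Fin N, Seg (A i) (B i) = Seg s.1 s.2)
    (hAB : ∀ i, A i ≠ B i) :
    (∀ k, vseg k ∈ S' → ∃ i, isV A B i k) ∧
    (∀ y j, hseg y j ∈ S' → ∃ i, isH A B i y j) := by
  constructor
  · intro k hk
    obtain ⟨i, hi⟩ := hsurjS _ hk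
    refine ⟨i, ?_⟩
    have hseq' : Seg (A i) (B i) =
        Seg (((0:ℝ), 3*(k:ℝ)+2) : Pt) (((0:ℝ), 3*(k:ℝ)+4) : Pt) := hi
    have := seg_eq_vert (by linarith) (hAB i) hseq'
    rcases this with ⟨e1, e2⟩ | ⟨e1, e2⟩
    · exact Or.inl ⟨e1, e2⟩
    · exact Or.inr ⟨e1, e2⟩
  · intro y j hk
    obtain ⟨i, hi⟩ := hsurjS _ hk
    refine ⟨i, ?_⟩
    have hseq' : Seg (A i) (B i) =
        Seg ((-(2*(j:ℝ))-2, 3*(y:ℝ)) : Pt) ((-(2*(j:ℝ))-1, 3*(y:ℝ)) : Pt) := hi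
    have := seg_eq_horiz (by linarith) (hAB i) hseq'
    rcases this with ⟨e1, e2⟩ | ⟨e1, e2⟩
    · exact Or.inl ⟨e1, e2⟩
    · exact Or.inr ⟨e1, e2⟩

end EP


namespace EP
variable {N : ℕ} {A B : Fin N → Pt}

lemma ray_of_R {q : Fin N} {y j : ℕ} (h : RorH A B q y j) :
    B q = ((-(2*(j:ℝ))-1, 3*(y:ℝ)) : Pt) ∧ B q - A q = ((1:ℝ),(0:ℝ)) := by
  obtain ⟨h1, h2⟩ := h
  refine ⟨h2, ?_⟩
  rw [h1, h2]; ext <;> simp [hL, hR] <;> norm_num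

lemma ray_of_L {q : Fin N} {y j : ℕ} (h : LorH A B q y j) :
    B q = ((-(2*(j:ℝ))-2, 3*(y:ℝ)) : Pt) ∧ B q - A q = ((-1:ℝ),(0:ℝ)) := by
  obtain ⟨h1, h2⟩ := h
  refine ⟨h2, ?_⟩
  rw [h1, h2]; ext <;> simp [hL, hR] <;> norm_num

lemma ray_of_V {q : Fin N} {k : ℕ} (h : isV A B q k) :
    (B q).1 = 0 ∧ (B q - A q).1 = 0 := by
  rcases h with ⟨h1, h2⟩ | ⟨h1, h2⟩ <;> rw [h1, h2] <;> constructor <;> simp [vB, vT]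

lemma rowKey {m : ℕ} {S' : Finset (Pt × Pt)}
    (hsub : S' ⊆ Fam m) (hAB : ∀ i, A i ≠ B i)
    (hinj : Function.Injective (fun i => Seg (A i) (B i)))
    (hmemS : ∀ i : Fin N, ∃ s ∈ S', Seg (A i) (B i) = Seg s.1 s.2)
    (hsurjS : ∀ s ∈ S', ∃ i : Fin N, Seg (A i) (B i) = Seg s.1 s.2)
    (hesc : ∀ i : Fin N,
      (∀ j : Fin N, j ≠ i → Disjoint (Ray (B i) (B i - A i) \ {B i}) (Seg (A j) (B j))) ∨
      (∃ (j : Fin N) (t : ℝ), j < i ∧ 0 < t ∧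
        B i + t • (B i - A i) ∈ Ray (B j) (B j - A j) ∧
        ∀ j' : Fin N, j' ≠ i → ∀ t' : ℝ, 0 < t' → t' ≤ t →
          B i + t' • (B i - A i) ∉ Seg (A j') (B j'))) :
    ∀ (i : Fin N) (y j : ℕ), 0 < y →
      (RorH A B i y j → (∀ i' j', isH A B i' y j' → j ≤ j') ∧ vseg (y-1) ∉ S')
      ∧ (LorH A B i y j → ∀ i' j', isH A B i' y j' → j' ≤ j) := by
  have hcls := classify hsub hAB hmemS
  have hidx := idx_of_mem hsurjS hAB
  suffices H : ∀ (nn : ℕ) (i : Fin N), i.val = nn → ∀ (y j : ℕ), 0 < y →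
      (RorH A B i y j → (∀ i' j', isH A B i' y j' → j ≤ j') ∧ vseg (y-1) ∉ S')
      ∧ (LorH A B i y j → ∀ i' j', isH A B i' y j' → j' ≤ j) by
    exact fun i y j hy => H i.val i rfl y j hy
  intro nn
  induction nn using Nat.strong_induction_on with
  | _ nn IH =>
  intro i hival y j hy
  have hy1 : ((y-1 : ℕ) : ℝ) = (y:ℝ) - 1 := by
    have h1 : (1:ℕ) ≤ y := hy
    push_cast [h1]
    ring
  constructor
  -- ============ R-oriented case ============
  · intro hR0
    obtain ⟨hBi, hdir⟩ := ray_of_R hR0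
    have hisHi : isH A B i y j := Or.inl hR0
    have hpt : ∀ s : ℝ, B i + s • (B i - A i) = ((-(2*(j:ℝ))-1 + s, 3*(y:ℝ)) : Pt) := by
      intro s; rw [hdir, hBi, pt_add_smul]; ext <;> simp
    rcases hesc i with hopt1 | hopt2
    · -- option 1 : free forward ray
      constructor
      · intro i' j' hisH'
        by_contra hcon
        push_neg at hcon
        have hne : i' ≠ i := by
          intro he
          have := isH_unique hisH' hisHi he
          omega
        have hcast := natcast_lt hcon
        have hzray : hL y j' ∈ Ray (B i) (B i - A i) \ {B i} := by
          constructor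
          · exact ⟨2*(j:ℝ) - 2*(j':ℝ) - 1, by linarith, by rw [hpt]; ext <;> simp [hL] <;> ring⟩
          · simp only [Set.mem_singleton_iff]
            intro hcontra
            have := congrArg Prod.fst hcontra
            rw [hBi] at this; simp [hL] at this; linarith
        have hzseg : hL y j' ∈ Seg (A i') (B i') := by
          rw [seg_of_isH hisH', mem_seg_h]
          simp [hL] <;> linarith
        exact Set.disjoint_left.mp (hopt1 i' hne) hzray hzseg
      · intro hvS
        obtain ⟨ic, hicV⟩ := hidx.1 _ hvS
        have hne : ic ≠ i := fun he => isH_isV_false hisHi hicV he.symm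
        have hzray : (((0:ℝ), 3*(y:ℝ)) : Pt) ∈ Ray (B i) (B i - A i) \ {B i} := by
          constructor
          · exact ⟨2*(j:ℝ)+1, by positivity, by rw [hpt]; ext <;> simp <;> ring⟩
          · simp only [Set.mem_singleton_iff]
            intro hcontra
            have := congrArg Prod.fst hcontra
            rw [hBi] at this; simp at this
            have := Nat.cast_nonneg (α := ℝ) j
            linarith
        have hzseg : (((0:ℝ), 3*(y:ℝ)) : Pt) ∈ Seg (A ic) (B ic) := by
          rw [seg_of_isV hicV, mem_seg_v]
          refine ⟨rfl, ?_, ?_⟩ <;> simp [hy1] <;> linarith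
        exact Set.disjoint_left.mp (hopt1 ic hne) hzray hzseg
    · -- option 2 : rescued
      obtain ⟨j₀, t, hj₀, ht, hmem, hclean⟩ := hopt2
      have hnej₀ : j₀ ≠ i := ne_of_lt hj₀
      obtain ⟨t', ht', hz⟩ := hmem
      rw [hpt t] at hz
      rcases hcls j₀ with ⟨y'', j'', hy'', hy''m, hj''m, hisH'', _⟩ | ⟨k, hk, hisV'', _⟩
      · -- j₀ horizontal : contradiction in all cases
        exfalso
        have hyy : y'' = y := by
          rcases hisH'' with hRR | hLL
          · obtain ⟨hB'', hd''⟩ := ray_of_R hRR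
            rw [hd'', hB'', pt_add_smul] at hz
            have h2 := congrArg Prod.snd hz
            simp at h2
            first
            | exact h2.symm
            | (have hcy : (y'':ℝ) = y := by linarith
               exact_mod_cast hcy)
          · obtain ⟨hB'', hd''⟩ := ray_of_L hLL
            rw [hd'', hB'', pt_add_smul] at hz
            have h2 := congrArg Prod.snd hz
            simp at h2
            first
            | exact h2.symm
            | (have hcy : (y'':ℝ) = y := by linarith
               exact_mod_cast hcy)
        subst hyy
        have hIH := IH j₀.val (by omega) j₀ rfl y'' j'' hy''
        have hjne : j'' ≠ j := by
          intro he
          subst he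
          apply hnej₀
          apply hinj
          simp only
          rw [seg_of_isH hisH'', seg_of_isH hisHi]
        rcases hisH'' with hRR | hLL
        · -- j₀ R-oriented : j'' < j, blocked by left end of j₀
          have hle : j'' ≤ j := (hIH.1 hRR).1 i j hisHi
          have hlt : j'' < j := by omega
          have hcast := natcast_lt hlt
          obtain ⟨hB'', hd''⟩ := ray_of_R hRR
          rw [hd'', hB'', pt_add_smul] at hz
          have h1 := congrArg Prod.fst hz
          simp at h1
          -- z.1 = -(2j)-1+t = -(2j'')-1+t' ≥ -(2j'')-1
          refine hclean j₀ hnej₀ (2*(j:ℝ) - 2*(j'':ℝ) - 1) (by linarith) (by linarith) ?_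
          rw [hpt]
          rw [seg_of_isH (Or.inl hRR), mem_seg_h]
          constructor
          · simp
          · constructor <;> simp <;> ring_nf <;> linarith
        · -- j₀ L-oriented : j < j'', ray too far left
          have hle : j ≤ j'' := (hIH.2 hLL) i j hisHi
          have hlt : j < j'' := by omega
          have hcast := natcast_lt hlt
          obtain ⟨hB'', hd''⟩ := ray_of_L hLL
          rw [hd'', hB'', pt_add_smul] at hz
          have h1 := congrArg Prod.fst hz
          simp at h1
          linarith
      · -- j₀ vertical : z = (0, 3y), t = 2j+1
        obtain ⟨hv1, hv2⟩ := ray_of_V hisV''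
        have h1 := congrArg Prod.fst hz
        rw [pt_add_smul] at h1
        simp [hv1, hv2] at h1
        -- h1 : -(2j)-1 + t = 0
        constructor
        · intro i' j' hisH'
          by_contra hcon
          push_neg at hcon
          have hne : i' ≠ i := by
            intro he
            have := isH_unique hisH' hisHi he
            omega
          have hcast := natcast_lt hcon
          refine hclean i' hne (2*(j:ℝ) - 2*(j':ℝ) - 1) (by linarith) (by linarith) ?_
          rw [hpt, seg_of_isH hisH', mem_seg_h]
          refine ⟨by simp, ?_, ?_⟩ <;> simp <;> ring_nf <;> linarith
        · intro hvS
          obtain ⟨ic, hicV⟩ := hidx.1 _ hvS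
          have hne : ic ≠ i := fun he => isH_isV_false hisHi hicV he.symm
          refine hclean ic hne t (by linarith) le_rfl ?_
          rw [hpt, seg_of_isV hicV, mem_seg_v]
          refine ⟨by simp; linarith, ?_, ?_⟩ <;> simp [hy1] <;> linarith
  -- ============ L-oriented case ============
  · intro hL0
    obtain ⟨hBi, hdir⟩ := ray_of_L hL0
    have hisHi : isH A B i y j := Or.inr hL0
    have hpt : ∀ s : ℝ, B i + s • (B i - A i) = ((-(2*(j:ℝ))-2 - s, 3*(y:ℝ)) : Pt) := by
      intro s; rw [hdir, hBi, pt_add_smul]; ext <;> simp <;> ring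
    rcases hesc i with hopt1 | hopt2
    · intro i' j' hisH'
      by_contra hcon
      push_neg at hcon
      have hne : i' ≠ i := by
        intro he
        have := isH_unique hisH' hisHi he
        omega
      have hcast := natcast_lt hcon
      have hzray : hR y j' ∈ Ray (B i) (B i - A i) \ {B i} := by
        constructor
        · exact ⟨2*(j':ℝ) - 2*(j:ℝ) - 1, by linarith, by rw [hpt]; ext <;> simp [hR] <;> ring⟩
        · simp only [Set.mem_singleton_iff]
          intro hcontra
          have := congrArg Prod.fst hcontra
          rw [hBi] at this; simp [hR] at this; linarith
      have hzseg : hR y j' ∈ Seg (A i') (B i') := by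
        rw [seg_of_isH hisH', mem_seg_h]
        simp [hR] <;> linarith
      exact Set.disjoint_left.mp (hopt1 i' hne) hzray hzseg
    · obtain ⟨j₀, t, hj₀, ht, hmem, hclean⟩ := hopt2
      have hnej₀ : j₀ ≠ i := ne_of_lt hj₀
      obtain ⟨t', ht', hz⟩ := hmem
      rw [hpt t] at hz
      intro i' j' hisH'
      by_contra hcon
      push_neg at hcon
      exfalso
      rcases hcls j₀ with ⟨y'', j'', hy'', hy''m, hj''m, hisH'', _⟩ | ⟨k, hk, hisV'', _⟩
      · have hyy : y'' = y := by
          rcases hisH'' with hRR | hLL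
          · obtain ⟨hB'', hd''⟩ := ray_of_R hRR
            rw [hd'', hB'', pt_add_smul] at hz
            have h2 := congrArg Prod.snd hz
            simp at h2
            first
            | exact h2.symm
            | (have hcy : (y'':ℝ) = y := by linarith
               exact_mod_cast hcy)
          · obtain ⟨hB'', hd''⟩ := ray_of_L hLL
            rw [hd'', hB'', pt_add_smul] at hz
            have h2 := congrArg Prod.snd hz
            simp at h2
            first
            | exact h2.symm
            | (have hcy : (y'':ℝ) = y := by linarith
               exact_mod_cast hcy)
        subst hyy
        have hIH := IH j₀.val (by omega) j₀ rfl y'' j'' hy''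
        have hjne : j'' ≠ j := by
          intro he
          subst he
          apply hnej₀
          apply hinj
          simp only
          rw [seg_of_isH hisH'', seg_of_isH hisHi]
        rcases hisH'' with hRR | hLL
        · -- j₀ R-oriented : j'' < j but ray x ≥ -(2j'')-1 > z.1
          have hle : j'' ≤ j := (hIH.1 hRR).1 i j hisHi
          have hlt : j'' < j := by omega
          have hcast := natcast_lt hlt
          obtain ⟨hB'', hd''⟩ := ray_of_R hRR
          rw [hd'', hB'', pt_add_smul] at hz
          have h1 := congrArg Prod.fst hz
          simp at h1
          linarith
        · -- j₀ L-oriented : j < j'', blocked by right end of j₀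
          have hle : j ≤ j'' := (hIH.2 hLL) i j hisHi
          have hlt : j < j'' := by omega
          have hcast := natcast_lt hlt
          obtain ⟨hB'', hd''⟩ := ray_of_L hLL
          rw [hd'', hB'', pt_add_smul] at hz
          have h1 := congrArg Prod.fst hz
          simp at h1
          refine hclean j₀ hnej₀ (2*(j'':ℝ) - 2*(j:ℝ) - 1) (by linarith) (by linarith) ?_
          rw [hpt]
          rw [seg_of_isH (Or.inr hLL), mem_seg_h]
          refine ⟨by simp, ?_, ?_⟩ <;> simp <;> ring_nf <;> linarith
      · -- j₀ vertical : impossible, leftward ray never reaches x = 0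
        obtain ⟨hv1, hv2⟩ := ray_of_V hisV''
        have h1 := congrArg Prod.fst hz
        rw [pt_add_smul] at h1
        simp [hv1, hv2] at h1
        have := Nat.cast_nonneg (α := ℝ) j
        linarith
end EP


namespace EP

theorem card_bound {m : ℕ} (hm : 1 ≤ m) (S' : Finset (Pt × Pt)) (hsub : S' ⊆ Fam m)
    {N : ℕ} {A B : Fin N → Pt}
    (hAB : ∀ i, A i ≠ B i)
    (hinj : Function.Injective (fun i => Seg (A i) (B i)))
    (hrange : Set.range (fun i => Seg (A i) (B i)) =
      (fun s => Seg s.1 s.2) '' (S' : Set (Pt × Pt)))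
    (hesc : ∀ i : Fin N,
      (∀ j : Fin N, j ≠ i → Disjoint (Ray (B i) (B i - A i) \ {B i}) (Seg (A j) (B j))) ∨
      (∃ (j : Fin N) (t : ℝ), j < i ∧ 0 < t ∧
        B i + t • (B i - A i) ∈ Ray (B j) (B j - A j) ∧
        ∀ j' : Fin N, j' ≠ i → ∀ t' : ℝ, 0 < t' → t' ≤ t →
          B i + t' • (B i - A i) ∉ Seg (A j') (B j'))) :
    S'.card ≤ 2*m - 1 := by
  have hmemS : ∀ i : Fin N, ∃ s ∈ S', Seg (A i) (B i) = Seg s.1 s.2 := by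
    intro i
    have hmem : Seg (A i) (B i) ∈ Set.range (fun i => Seg (A i) (B i)) := ⟨i, rfl⟩
    rw [hrange] at hmem
    obtain ⟨s, hs, hseq⟩ := hmem
    exact ⟨s, hs, hseq.symm⟩
  have hsurjS : ∀ s ∈ S', ∃ i : Fin N, Seg (A i) (B i) = Seg s.1 s.2 := by
    intro s hs
    have hmem : Seg s.1 s.2 ∈ (fun s => Seg s.1 s.2) '' (S' : Set (Pt × Pt)) :=
      ⟨s, hs, rfl⟩
    rw [← hrange] at hmem
    obtain ⟨i, hi⟩ := hmem
    exact ⟨i, hi⟩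
  have hRK := rowKey hsub hAB hinj hmemS hsurjS hesc
  have hcls := classify hsub hAB hmemS
  have hdesc : ∀ i : Fin N, ∃ p : ℕ × ℕ × ℕ,
      (p.2.2 = 0 ∧ p.2.1 < m ∧ isV A B i p.2.1 ∧ vseg p.2.1 ∈ S') ∨
      (p.2.2 = 1 ∧ 0 < p.1 ∧ p.1 < m ∧ RorH A B i p.1 p.2.1 ∧ hseg p.1 p.2.1 ∈ S') ∨
      (p.2.2 = 2 ∧ 0 < p.1 ∧ p.1 < m ∧ LorH A B i p.1 p.2.1 ∧ hseg p.1 p.2.1 ∈ S') := by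
    intro i
    rcases hcls i with ⟨y, j, h1, h2, h3, hH, hmem⟩ | ⟨k, hk, hV, hmem⟩
    · rcases hH with hr | hl
      · exact ⟨(y, j, 1), Or.inr (Or.inl ⟨rfl, h1, h2, hr, hmem⟩)⟩
      · exact ⟨(y, j, 2), Or.inr (Or.inr ⟨rfl, h1, h2, hl, hmem⟩)⟩
    · exact ⟨(0, k, 0), Or.inl ⟨rfl, hk, hV, hmem⟩⟩
  choose P hP using hdesc
  classical
  set Φ : Fin N → ℕ × ℕ := fun i =>
    if (P i).2.2 = 0 then (if (P i).2.1 + 1 < m then ((P i).2.1 + 1, 1) else (0,0))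
    else ((P i).1, (P i).2.2) with hΦ
  set T : Finset (ℕ × ℕ) := (Finset.Ioo 0 m ×ˢ ({1,2} : Finset ℕ)) ∪ {((0:ℕ),(0:ℕ))}
    with hT
  have hmaps : ∀ i, Φ i ∈ T := by
    intro i
    rcases hP i with ⟨ho, hk, _, _⟩ | ⟨ho, h1, h2, _, _⟩ | ⟨ho, h1, h2, _, _⟩
    · simp only [hΦ, ho, if_pos]
      by_cases hc : (P i).2.1 + 1 < m
      · rw [if_pos hc]
        simp [hT, Finset.mem_union, Finset.mem_product]
        omega
      · rw [if_neg hc]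
        simp [hT]
    · simp only [hΦ]
      rw [if_neg (by omega), ho]
      simp [hT, Finset.mem_union, Finset.mem_product]
      omega
    · simp only [hΦ]
      rw [if_neg (by omega), ho]
      simp [hT, Finset.mem_union, Finset.mem_product]
      omega
  have hseg_eq_idx : ∀ (i1 i2 : Fin N) (y j : ℕ),
      isH A B i1 y j → isH A B i2 y j → i1 = i2 := by
    intro i1 i2 y j h1 h2
    apply hinj
    simp only
    rw [seg_of_isH h1, seg_of_isH h2]
  have hvseg_eq_idx : ∀ (i1 i2 : Fin N) (k : ℕ),
      isV A B i1 k → isV A B i2 k → i1 = i2 := by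
    intro i1 i2 k h1 h2
    apply hinj
    simp only
    rw [seg_of_isV h1, seg_of_isV h2]
  have hinjΦ : Function.Injective Φ := by
    intro i1 i2 heq
    rcases hP i1 with ⟨ho1, hk1, hV1, hm1⟩ | ⟨ho1, ha1, hb1, hR1, hm1⟩ | ⟨ho1, ha1, hb1, hL1, hm1⟩ <;>
      rcases hP i2 with ⟨ho2, hk2, hV2, hm2⟩ | ⟨ho2, ha2, hb2, hR2, hm2⟩ | ⟨ho2, ha2, hb2, hL2, hm2⟩
    -- 0,0
    · simp only [hΦ, ho1, ho2, if_pos] at heq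
      by_cases hc1 : (P i1).2.1 + 1 < m <;> by_cases hc2 : (P i2).2.1 + 1 < m
      · rw [if_pos hc1, if_pos hc2] at heq
        simp only [Prod.mk.injEq] at heq
        have : (P i1).2.1 = (P i2).2.1 := by omega
        exact hvseg_eq_idx i1 i2 _ hV1 (this ▸ hV2)
      · rw [if_pos hc1, if_neg hc2] at heq
        simp only [Prod.mk.injEq] at heq
        omega
      · rw [if_neg hc1, if_pos hc2] at heq
        simp only [Prod.mk.injEq] at heq
        omega
      · have e1 : (P i1).2.1 = m - 1 := by omega
        have e2 : (P i2).2.1 = m - 1 := by omega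
        exact hvseg_eq_idx i1 i2 _ hV1 ((e1.trans e2.symm) ▸ hV2)
    -- 0,1 : vertical vs R-oriented
    · exfalso
      simp only [hΦ, ho1, if_pos] at heq
      rw [if_neg (by omega : ¬ (P i2).2.2 = 0)] at heq
      by_cases hc1 : (P i1).2.1 + 1 < m
      · rw [if_pos hc1] at heq
        simp only [Prod.mk.injEq] at heq
        -- (P i2).1 = (P i1).2.1 + 1
        have hRKi2 := (hRK i2 (P i2).1 (P i2).2.1 ha2).1 hR2
        apply hRKi2.2
        have : (P i2).1 - 1 = (P i1).2.1 := by omega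
        rw [this] at *
        exact hm1
      · rw [if_neg hc1] at heq
        simp only [Prod.mk.injEq] at heq
        omega
    -- 0,2
    · exfalso
      simp only [hΦ, ho1, if_pos] at heq
      rw [if_neg (by omega : ¬ (P i2).2.2 = 0)] at heq
      by_cases hc1 : (P i1).2.1 + 1 < m
      · rw [if_pos hc1] at heq
        simp only [Prod.mk.injEq] at heq
        omega
      · rw [if_neg hc1] at heq
        simp only [Prod.mk.injEq] at heq
        omega
    -- 1,0
    · exfalso
      simp only [hΦ, ho2, if_pos] at heq
      rw [if_neg (by omega : ¬ (P i1).2.2 = 0)] at heq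
      by_cases hc2 : (P i2).2.1 + 1 < m
      · rw [if_pos hc2] at heq
        simp only [Prod.mk.injEq] at heq
        have hRKi1 := (hRK i1 (P i1).1 (P i1).2.1 ha1).1 hR1
        apply hRKi1.2
        have : (P i1).1 - 1 = (P i2).2.1 := by omega
        rw [this] at *
        exact hm2
      · rw [if_neg hc2] at heq
        simp only [Prod.mk.injEq] at heq
        omega
    -- 1,1
    · simp only [hΦ] at heq
      rw [if_neg (by omega : ¬ (P i1).2.2 = 0), if_neg (by omega : ¬ (P i2).2.2 = 0)] at heq
      simp only [Prod.mk.injEq] at heq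
      have hyy : (P i1).1 = (P i2).1 := heq.1
      have hle1 := ((hRK i1 (P i1).1 (P i1).2.1 ha1).1 hR1).1 i2 (P i2).2.1
        (by rw [hyy]; exact Or.inl hR2)
      have hle2 := ((hRK i2 (P i2).1 (P i2).2.1 ha2).1 hR2).1 i1 (P i1).2.1
        (by rw [← hyy]; exact Or.inl hR1)
      have hjj : (P i1).2.1 = (P i2).2.1 := le_antisymm hle1 hle2
      exact hseg_eq_idx i1 i2 (P i1).1 (P i1).2.1 (Or.inl hR1)
        (by rw [hyy, hjj]; exact Or.inl hR2)
    -- 1,2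
    · exfalso
      simp only [hΦ] at heq
      rw [if_neg (by omega : ¬ (P i1).2.2 = 0), if_neg (by omega : ¬ (P i2).2.2 = 0)] at heq
      simp only [Prod.mk.injEq] at heq
      omega
    -- 2,0
    · exfalso
      simp only [hΦ, ho2, if_pos] at heq
      rw [if_neg (by omega : ¬ (P i1).2.2 = 0)] at heq
      by_cases hc2 : (P i2).2.1 + 1 < m
      · rw [if_pos hc2] at heq
        simp only [Prod.mk.injEq] at heq
        omega
      · rw [if_neg hc2] at heq
        simp only [Prod.mk.injEq] at heq
        omega
    -- 2,1
    · exfalso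
      simp only [hΦ] at heq
      rw [if_neg (by omega : ¬ (P i1).2.2 = 0), if_neg (by omega : ¬ (P i2).2.2 = 0)] at heq
      simp only [Prod.mk.injEq] at heq
      omega
    -- 2,2
    · simp only [hΦ] at heq
      rw [if_neg (by omega : ¬ (P i1).2.2 = 0), if_neg (by omega : ¬ (P i2).2.2 = 0)] at heq
      simp only [Prod.mk.injEq] at heq
      have hyy : (P i1).1 = (P i2).1 := heq.1
      have hle1 := ((hRK i1 (P i1).1 (P i1).2.1 ha1).2 hL1) i2 (P i2).2.1
        (by rw [hyy]; exact Or.inr hL2)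
      have hle2 := ((hRK i2 (P i2).1 (P i2).2.1 ha2).2 hL2) i1 (P i1).2.1
        (by rw [← hyy]; exact Or.inr hL1)
      have hjj : (P i1).2.1 = (P i2).2.1 := le_antisymm hle2 hle1
      exact hseg_eq_idx i1 i2 (P i1).1 (P i1).2.1 (Or.inr hL1)
        (by rw [hyy, hjj]; exact Or.inr hL2)
  have hNle : N ≤ T.card := by
    have := Finset.card_le_card_of_injOn (s := (Finset.univ : Finset (Fin N))) (t := T)
      Φ (fun i _ => hmaps i) (hinjΦ.injOn)
    simpa using this
  have hTcard : T.card = 2*m - 1 := by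
    rw [hT, Finset.card_union_of_disjoint, Finset.card_product, Nat.card_Ioo]
    · have : ({1, 2} : Finset ℕ).card = 2 := by decide
      rw [this]
      simp
      omega
    · rw [Finset.disjoint_left]
      intro p hp hp'
      simp [Finset.mem_product, Prod.ext_iff] at hp hp'
      omega
  have hSeqN : S'.card = N := by
    have hinjOnSeg : Set.InjOn (fun s => Seg s.1 s.2) (S' : Set (Pt × Pt)) := by
      intro s hs t ht hst
      by_contra hne
      have hdisj := disj_Fam (m := m) (Finset.mem_coe.mpr (hsub hs))
        (Finset.mem_coe.mpr (hsub ht)) hne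
      simp only at hst
      have hdisj' : Disjoint (Seg s.1 s.2) (Seg t.1 t.2) := hdisj
      rw [hst] at hdisj'
      have hnonempty : (Seg t.1 t.2).Nonempty := ⟨t.1, left_mem_segment ℝ t.1 t.2⟩
      rw [disjoint_self] at hdisj'
      rw [Set.bot_eq_empty] at hdisj'
      exact hnonempty.ne_empty hdisj'
    calc S'.card = (S' : Set (Pt × Pt)).ncard := (Set.ncard_coe_finset S').symm
      _ = ((fun s => Seg s.1 s.2) '' (S' : Set (Pt × Pt))).ncard :=
          (Set.ncard_image_of_injOn hinjOnSeg).symm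
      _ = (Set.range fun i => Seg (A i) (B i)).ncard := by rw [hrange]
      _ = ((fun i => Seg (A i) (B i)) '' Set.univ).ncard := by rw [Set.image_univ]
      _ = (Set.univ : Set (Fin N)).ncard := Set.ncard_image_of_injOn (hinj.injOn)
      _ = N := by rw [Set.ncard_univ, Nat.card_eq_fintype_card, Fintype.card_fin]
  omega
end EP

/-- For every `n ≥ 1` there is a family of `n` pairwise disjoint segments
such that every subfamily admitting escape routes has at most `2⌈√n⌉ − 1` segments. -/



theorem escape_routes_upper_bound (n : ℕ) (hn : 1 ≤ n) :
    ∃ S : Finset (Pt × Pt), S.card = n ∧ DisjointFamily S ∧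
      ∀ S' ⊆ S, AdmitsEscapeRoutes S' →
        (S'.card : ℤ) ≤ 2 * ⌈Real.sqrt (n : ℝ)⌉ - 1 := by
  set m : ℕ := (⌈Real.sqrt (n : ℝ)⌉).toNat with hm
  have hsqrt_pos : 0 < Real.sqrt n := Real.sqrt_pos.mpr (by
    have : (1:ℝ) ≤ (n:ℝ) := by exact_mod_cast hn
    linarith)
  have hceil_pos : 0 < ⌈Real.sqrt (n:ℝ)⌉ := Int.ceil_pos.mpr hsqrt_pos
  have hm1 : 1 ≤ m := by rw [hm]; omega
  have hmz : (m : ℤ) = ⌈Real.sqrt (n:ℝ)⌉ := by rw [hm]; omega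
  have hnm : n ≤ m * m := by
    have h1 : Real.sqrt n ≤ (m : ℝ) := by
      have h2 : ((m:ℤ) : ℝ) = (m : ℝ) := by push_cast; ring
      rw [← h2, hmz]
      exact Int.le_ceil _
    have h2 : (n:ℝ) ≤ (m:ℝ) * m := by
      nlinarith [Real.sq_sqrt (show (0:ℝ) ≤ (n:ℝ) by positivity), Real.sqrt_nonneg (n:ℝ)]
    exact_mod_cast h2
  obtain ⟨S, hSsub, hScard⟩ := Finset.exists_subset_card_eq (s := EP.Fam m) (n := n)
    (by rw [EP.card_Fam hm1]; exact hnm)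
  refine ⟨S, hScard, ⟨fun s hs => EP.nondeg_Fam s (hSsub hs),
    EP.disj_Fam.mono (Finset.coe_subset.mpr hSsub)⟩, ?_⟩
  intro S' hS' hE
  obtain ⟨N, A, B, hAB, hinj, hrange, hesc⟩ := hE
  have hb := EP.card_bound hm1 S' (hS'.trans hSsub) hAB hinj hrange hesc
  omega
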